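/- arXiv:1402.0344 — 2 statements merged into one kernel-verified Lean document; each statement's English description precedes it below -/
import Mathlib

section
/- Let f be a prime and D a discriminant. Suppose Q₁ and Q₂ are semi-equivalent primitive forms of discriminant Df², and q₁, q₂ are primitive forms of discriminant D with integer matrices M₁, M₂ of determinant f such that Qᵢ = qᵢ·Mᵢ. Then q₁ and q₂ are properly equivalent. -/
/-- An integral binary quadratic form ax² + bxy + cy². -/
structure BQF where
  a : ℤ
  b : ℤ
  c : ℤ

namespace BQF

/-- Value of the form at (x, y). -/
def eval (q : BQF) (x y : ℤ) : ℤ := q.a * x ^ 2 + q.b * x * y + q.c * y ^ 2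

/-- Discriminant b² - 4ac. -/
def disc (q : BQF) : ℤ := q.b ^ 2 - 4 * q.a * q.c

/-- A form is primitive if gcd(a, b, c) = 1. -/
def IsPrimitive (q : BQF) : Prop := Int.gcd (Int.gcd q.a q.b) q.c = 1

/-- Right action: (q·M)(x,y) = q(px + ry, sx + ty) for M = [[p,r],[s,t]]. -/
def act (q : BQF) (M : Matrix (Fin 2) (Fin 2) ℤ) : BQF :=
  ⟨q.eval (M 0 0) (M 1 0),
   q.eval (M 0 0 + M 0 1) (M 1 0 + M 1 1) - q.eval (M 0 0) (M 1 0) - q.eval (M 0 1) (M 1 1),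
   q.eval (M 0 1) (M 1 1)⟩

/-- Proper equivalence: equivalence under the SL₂(ℤ) action. -/
def ProperEquiv (q q' : BQF) : Prop :=
  ∃ U : Matrix.SpecialLinearGroup (Fin 2) ℤ, q.act U.1 = q'

end BQF

/-- R_g = [[f,g],[0,1]] for g < f, and R_f = [[1,0],[0,f]] when g = f. -/
def Rmat (f g : ℤ) : Matrix (Fin 2) (Fin 2) ℤ :=
  if g = f then !![1, 0; 0, f] else !![f, g; 0, 1]

/-- A discriminant: a non-square integer congruent to 0 or 1 mod 4. -/
def IsDiscriminant (D : ℤ) : Prop := ¬ IsSquare D ∧ (D % 4 = 0 ∨ D % 4 = 1)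

/-- A fundamental discriminant. -/
def IsFundamental (D : ℤ) : Prop :=
  (D % 4 = 1 ∧ Squarefree D) ∨
  (D % 4 = 0 ∧ Squarefree (D / 4) ∧ (D / 4 % 4 = 2 ∨ D / 4 % 4 = 3))

/-- Semi-equivalence of forms of discriminant Df². -/
def SemiEquiv (f D : ℤ) (Q₁ Q₂ : BQF) : Prop :=
  ∃ q₁ q₂ : BQF, ∃ g₁ g₂ : ℤ, ∃ U₁ U₂ : Matrix.SpecialLinearGroup (Fin 2) ℤ,
    q₁.IsPrimitive ∧ q₂.IsPrimitive ∧ q₁.disc = D ∧ q₂.disc = D ∧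
    BQF.ProperEquiv q₁ q₂ ∧ 0 ≤ g₁ ∧ g₁ ≤ f ∧ 0 ≤ g₂ ∧ g₂ ≤ f ∧
    Q₁ = q₁.act (Rmat f g₁ * U₁.1) ∧ Q₂ = q₂.act (Rmat f g₂ * U₂.1)

open Matrix in
lemma act_explicit (q : BQF) (p r s t : ℤ) :
    q.act !![p, r; s, t] =
      ⟨q.a*p^2 + q.b*p*s + q.c*s^2,
       2*q.a*p*r + q.b*(p*t + r*s) + 2*q.c*s*t,
       q.a*r^2 + q.b*r*t + q.c*t^2⟩ := by
  simp only [BQF.act, BQF.eval, cons_val', cons_val_zero, cons_val_one, head_cons,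
    empty_val', cons_val_fin_one, head_fin_const, of_apply, BQF.mk.injEq]
  refine ⟨trivial, by ring, trivial⟩

open Matrix in
lemma act_mul (q : BQF) (M N : Matrix (Fin 2) (Fin 2) ℤ) :
    q.act (M * N) = (q.act M).act N := by
  rw [Matrix.eta_fin_two M, Matrix.eta_fin_two N, Matrix.mul_fin_two,
    act_explicit, act_explicit, act_explicit]
  simp only [BQF.mk.injEq]
  refine ⟨by ring, by ring, by ring⟩

lemma rank1 {K : Type*} [Field K] (p r s t : K) (hdet : p * t = r * s) :
    ∃ u1 u2 v1 v2 : K, p = u1*v1 ∧ r = u1*v2 ∧ s = u2*v1 ∧ t = u2*v2 := by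
  by_cases hp : p ≠ 0
  · have hr : r = p * (r / p) := by field_simp
    have ht : t = s * (r / p) := by
      rw [mul_div_assoc', eq_div_iff hp]
      linear_combination hdet
    exact ⟨p, s, 1, r / p, by ring, hr, by ring, ht⟩
  · push_neg at hp
    subst hp
    by_cases hs : s ≠ 0
    · have hrs : r * s = 0 := by linear_combination -hdet
      have hr : r = 0 := by
        rcases mul_eq_zero.1 hrs with h | h
        · exact h
        · exact absurd h hs
      have ht : t = s * (t / s) := by field_simp
      exact ⟨0, s, 1, t / s, by ring, by rw [hr]; ring, by ring, ht⟩
    · push_neg at hs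
      subst hs
      exact ⟨r, t, 0, 1, by ring, by ring, by ring, by ring⟩

lemma key (f : ℕ) (hf : f.Prime)
    (a b c A B C p r s t p' r' s' t' a' c' : ℤ)
    (hdet : p*t - r*s = (f:ℤ))
    (hQprim : ¬((f:ℤ) ∣ A ∧ (f:ℤ) ∣ B ∧ (f:ℤ) ∣ C))
    (hA : A = a*p^2 + b*p*s + c*s^2)
    (hB : B = 2*a*p*r + b*(p*t + r*s) + 2*c*s*t)
    (hC : C = a*r^2 + b*r*t + c*t^2)
    (e1 : a*(p*t'-r*s')^2 + b*(p*t'-r*s')*(s*t'-t*s') + c*(s*t'-t*s')^2 = (f:ℤ)^2*a')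
    (e3 : a*(r*p'-p*r')^2 + b*(r*p'-p*r')*(t*p'-s*r') + c*(t*p'-s*r')^2 = (f:ℤ)^2*c') :
    (f:ℤ) ∣ (p*t'-r*s') ∧ (f:ℤ) ∣ (r*p'-p*r') ∧ (f:ℤ) ∣ (s*t'-t*s') ∧ (f:ℤ) ∣ (t*p'-s*r') := by
  haveI : Fact f.Prime := ⟨hf⟩
  set K := ZMod f
  have hd : (p : K) * (t : K) = (r : K) * (s : K) := by
    have := congrArg (Int.cast : ℤ → ZMod f) hdet
    push_cast at this
    rw [ZMod.natCast_self] at this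
    linear_combination this
  obtain ⟨u1, u2, v1, v2, hp, hr, hs, ht⟩ := rank1 (p : K) (r : K) (s : K) (t : K) hd
  set qu : K := (a:K)*u1^2 + (b:K)*u1*u2 + (c:K)*u2^2 with hqu_def
  have hqu : qu ≠ 0 := by
    intro h0
    apply hQprim
    refine ⟨?_, ?_, ?_⟩ <;> rw [← ZMod.intCast_zmod_eq_zero_iff_dvd]
    · rw [hA]; push_cast; rw [hp, hs]; linear_combination v1^2 * h0
    · rw [hB]; push_cast; rw [hp, hr, hs, ht]; linear_combination 2*v1*v2 * h0
    · rw [hC]; push_cast; rw [hr, ht]; linear_combination v2^2 * h0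
  have E1 : (a:K)*((p:K)*(t':K)-(r:K)*(s':K))^2
      + (b:K)*((p:K)*(t':K)-(r:K)*(s':K))*((s:K)*(t':K)-(t:K)*(s':K))
      + (c:K)*((s:K)*(t':K)-(t:K)*(s':K))^2 = 0 := by
    have := congrArg (Int.cast : ℤ → ZMod f) e1
    push_cast at this
    rw [ZMod.natCast_self] at this
    linear_combination this
  have E3 : (a:K)*((r:K)*(p':K)-(p:K)*(r':K))^2
      + (b:K)*((r:K)*(p':K)-(p:K)*(r':K))*((t:K)*(p':K)-(s:K)*(r':K))
      + (c:K)*((t:K)*(p':K)-(s:K)*(r':K))^2 = 0 := by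
    have := congrArg (Int.cast : ℤ → ZMod f) e3
    push_cast at this
    rw [ZMod.natCast_self] at this
    linear_combination this
  rw [hp, hr, hs, ht] at E1 E3
  set w1 : K := v1*(t':K) - v2*(s':K) with hw1_def
  set w2 : K := v2*(p':K) - v1*(r':K) with hw2_def
  have hw1 : w1 = 0 := by
    have h : w1 ^ 2 * qu = 0 := by rw [hw1_def, hqu_def]; linear_combination E1
    rcases mul_eq_zero.1 h with h | h
    · exact pow_eq_zero_iff (by norm_num) |>.1 h
    · exact absurd h hqu
  have hw2 : w2 = 0 := by
    have h : w2 ^ 2 * qu = 0 := by rw [hw2_def, hqu_def]; linear_combination E3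
    rcases mul_eq_zero.1 h with h | h
    · exact pow_eq_zero_iff (by norm_num) |>.1 h
    · exact absurd h hqu
  refine ⟨?_, ?_, ?_, ?_⟩ <;> rw [← ZMod.intCast_zmod_eq_zero_iff_dvd] <;> push_cast
  · rw [hp, hr]; linear_combination u1 * hw1
  · rw [hp, hr]; linear_combination u1 * hw2
  · rw [hs, ht]; linear_combination u2 * hw1
  · rw [hs, ht]; linear_combination u2 * hw2

lemma core (f : ℕ) (hf : f.Prime) (Q q q' : BQF) (hQ : Q.IsPrimitive)
    (M M' : Matrix (Fin 2) (Fin 2) ℤ) (hM : M.det = (f:ℤ)) (hM' : M'.det = (f:ℤ))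
    (h : q.act M = Q) (h' : q'.act M' = Q) : BQF.ProperEquiv q q' := by
  have hf0 : (f:ℤ) ≠ 0 := Int.natCast_ne_zero.2 hf.ne_zero
  have hf2 : ((f:ℤ)^2) ≠ 0 := pow_ne_zero _ hf0
  set p := M 0 0 with hp; set r := M 0 1 with hr; set s := M 1 0 with hs; set t := M 1 1 with ht
  set p' := M' 0 0; set r' := M' 0 1; set s' := M' 1 0; set t' := M' 1 1
  have hMe : M = !![p, r; s, t] := Matrix.eta_fin_two M
  have hMe' : M' = !![p', r'; s', t'] := Matrix.eta_fin_two M'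
  rw [Matrix.det_fin_two] at hM hM'
  -- the product with the adjugate
  have hAdj : M * M'.adjugate = !![p*t'-r*s', r*p'-p*r'; s*t'-t*s', t*p'-s*r'] := by
    rw [hMe', Matrix.adjugate_fin_two, hMe, Matrix.mul_fin_two]
    ext i j
    fin_cases i <;> fin_cases j <;>
      simp only [Matrix.cons_val', Matrix.cons_val_zero, Matrix.cons_val_one,
        Matrix.head_cons, Matrix.empty_val', Matrix.cons_val_fin_one,
        Matrix.head_fin_const, Matrix.of_apply, Fin.isValue] <;> ring
  have hScal : M' * M'.adjugate = !![(f:ℤ), 0; 0, (f:ℤ)] := by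
    rw [Matrix.mul_adjugate]
    rw [show M'.det = (f:ℤ) from by rw [Matrix.det_fin_two]; exact hM']
    ext i j
    fin_cases i <;> fin_cases j <;>
      simp [Matrix.smul_apply, Matrix.one_apply]
  have hAct : q.act !![p*t'-r*s', r*p'-p*r'; s*t'-t*s', t*p'-s*r'] =
      ⟨(f:ℤ)^2*q'.a, (f:ℤ)^2*q'.b, (f:ℤ)^2*q'.c⟩ := by
    rw [← hAdj, act_mul, h, ← h', ← act_mul, hScal, act_explicit]
    simp only [BQF.mk.injEq]
    refine ⟨by ring, by ring, by ring⟩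
  rw [act_explicit] at hAct
  obtain ⟨e1, e2, e3⟩ := BQF.mk.injEq .. ▸ hAct
  -- component equations for Q
  have hQc : Q.a = q.a*p^2 + q.b*p*s + q.c*s^2 ∧
      Q.b = 2*q.a*p*r + q.b*(p*t + r*s) + 2*q.c*s*t ∧
      Q.c = q.a*r^2 + q.b*r*t + q.c*t^2 := by
    rw [← h, hMe, act_explicit]
    exact ⟨rfl, rfl, rfl⟩
  have hQprim : ¬((f:ℤ) ∣ Q.a ∧ (f:ℤ) ∣ Q.b ∧ (f:ℤ) ∣ Q.c) := by
    rintro ⟨d1, d2, d3⟩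
    have : (f:ℤ) ∣ ((Int.gcd (Int.gcd Q.a Q.b) Q.c : ℤ)) :=
      Int.dvd_coe_gcd (Int.dvd_coe_gcd d1 d2) d3
    rw [hQ] at this
    have h1 : (f:ℤ) ≤ 1 := Int.le_of_dvd one_pos this
    have := hf.two_le
    omega
  obtain ⟨d1, d2, d3, d4⟩ := key f hf q.a q.b q.c Q.a Q.b Q.c p r s t p' r' s' t'
    q'.a q'.c hM hQprim hQc.1 hQc.2.1 hQc.2.2 e1 e3
  obtain ⟨α₀, hα⟩ := d1
  obtain ⟨β₀, hβ⟩ := d2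
  obtain ⟨γ₀, hγ⟩ := d3
  obtain ⟨δ₀, hδ⟩ := d4
  have hdetB : (!![α₀, β₀; γ₀, δ₀] : Matrix (Fin 2) (Fin 2) ℤ).det = 1 := by
    rw [Matrix.det_fin_two_of]
    have hid : (p*t'-r*s')*(t*p'-s*r') - (r*p'-p*r')*(s*t'-t*s')
        = (p*t-r*s)*(p'*t'-r'*s') := by ring
    rw [hα, hβ, hγ, hδ, hM, hM'] at hid
    have h2 : (f:ℤ)^2 * (α₀*δ₀ - β₀*γ₀) = (f:ℤ)^2 * 1 := by linear_combination hid
    exact mul_left_cancel₀ hf2 h2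
  refine ⟨⟨!![α₀, β₀; γ₀, δ₀], hdetB⟩, ?_⟩
  rw [act_explicit]
  simp only [hα, hβ, hγ, hδ] at e1 e2 e3
  obtain ⟨A', B', C'⟩ := q'
  simp only [BQF.mk.injEq]
  refine ⟨mul_left_cancel₀ hf2 ?_, mul_left_cancel₀ hf2 ?_, mul_left_cancel₀ hf2 ?_⟩
  · linear_combination e1
  · linear_combination e2
  · linear_combination e3


lemma properEquiv_trans {q q' q'' : BQF} (h1 : BQF.ProperEquiv q q')
    (h2 : BQF.ProperEquiv q' q'') : BQF.ProperEquiv q q'' := by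
  obtain ⟨U, hU⟩ := h1
  obtain ⟨V, hV⟩ := h2
  exact ⟨U * V, by rw [Matrix.SpecialLinearGroup.coe_mul, act_mul, hU, hV]⟩

lemma det_Rmat_mul (f : ℕ) (g : ℤ) (U : Matrix.SpecialLinearGroup (Fin 2) ℤ) :
    (Rmat (f:ℤ) g * U.1).det = (f:ℤ) := by
  rw [Matrix.det_mul, Matrix.SpecialLinearGroup.det_coe, mul_one]
  unfold Rmat
  split <;> simp [Matrix.det_fin_two_of]

theorem stmt15 (f : ℕ) (hf : f.Prime) (D : ℤ)
    (hD : IsDiscriminant D) (Q₁ Q₂ : BQF) (hQ₁ : Q₁.IsPrimitive) (hQ₂ : Q₂.IsPrimitive)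
    (hd₁ : Q₁.disc = D * f ^ 2) (hd₂ : Q₂.disc = D * f ^ 2)
    (hse : SemiEquiv f D Q₁ Q₂)
    (q₁ q₂ : BQF) (hq₁ : q₁.IsPrimitive) (hq₂ : q₂.IsPrimitive)
    (hqd₁ : q₁.disc = D) (hqd₂ : q₂.disc = D)
    (M₁ M₂ : Matrix (Fin 2) (Fin 2) ℤ) (hM₁ : M₁.det = f) (hM₂ : M₂.det = f)
    (h₁ : Q₁ = q₁.act M₁) (h₂ : Q₂ = q₂.act M₂) :
    BQF.ProperEquiv q₁ q₂ := by
  obtain ⟨q₁', q₂', g₁, g₂, U₁, U₂, _, _, _, _, hpe, _, _, _, _, hE₁, hE₂⟩ := hse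
  have e₁ : BQF.ProperEquiv q₁ q₁' :=
    core f hf Q₁ q₁ q₁' hQ₁ M₁ (Rmat (f:ℤ) g₁ * U₁.1) hM₁ (det_Rmat_mul f g₁ U₁)
      h₁.symm hE₁.symm
  have e₂ : BQF.ProperEquiv q₂' q₂ :=
    core f hf Q₂ q₂' q₂ hQ₂ (Rmat (f:ℤ) g₂ * U₂.1) M₂ (det_Rmat_mul f g₂ U₂) hM₂
      hE₂.symm h₂.symm
  exact properEquiv_trans (properEquiv_trans e₁ hpe) e₂
end

section
/- Let q be a primitive form of negative discriminant D < -4 and f an odd prime. For 0 ≤ g₁, g₂ ≤ f with f ∤ q(gᵢ,1) (or gᵢ = f), if q·R_{g₁} and q·R_{g₂} are properly equivalent then g₁ = g₂. In other words, the f - (D/f) primitive forms q·R_g are pairwise inequivalent. -/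
-- ======================== auxiliary lemmas ========================

namespace BQF

lemma act_act (q : BQF) (M N : Matrix (Fin 2) (Fin 2) ℤ) :
    (q.act M).act N = q.act (M * N) := by
  simp only [act, eval, Matrix.mul_apply, Fin.sum_univ_two, mk.injEq]
  refine ⟨by ring, by ring, by ring⟩

lemma act_mk (q : BQF) (p r s t : ℤ) :
    q.act !![p,r;s,t] = ⟨q.eval p s, q.eval (p+r) (s+t) - q.eval p s - q.eval r t, q.eval r t⟩ :=
  rfl

lemma act_one (q : BQF) : q.act 1 = q := by
  obtain ⟨a, b, c⟩ := q
  simp only [act, eval, Matrix.one_apply]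
  norm_num
  omega

lemma properEquiv_symm {q q' : BQF} (h : q.ProperEquiv q') : q'.ProperEquiv q := by
  obtain ⟨U, hU⟩ := h
  refine ⟨U⁻¹, ?_⟩
  rw [← hU, act_act, ← Matrix.SpecialLinearGroup.coe_mul, mul_inv_cancel,
    Matrix.SpecialLinearGroup.coe_one, act_one]

end BQF

private lemma structureLemma (a b c α β γ δ F : ℤ) (hF : F ≠ 0)
    (E1 : a*α^2 + b*α*γ + c*γ^2 = F*a)
    (E2 : a*β^2 + b*β*δ + c*δ^2 = F*c)
    (E3 : 2*a*α*β + b*(α*δ + β*γ) + 2*c*γ*δ = F*b)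
    (E4 : α*δ - β*γ = F) :
    a*β + c*γ = 0 ∧ a*δ = a*α + b*γ := by
  constructor
  · have h : 2*F*(a*β + c*γ) = 0 := by
      linear_combination δ*E3 - 2*γ*E2 - (2*a*β + b*δ)*E4
    have h2 : (2*F) ≠ 0 := by omega
    exact (mul_eq_zero.mp h).resolve_left h2
  · have h : 2*F*(a*δ - a*α - b*γ) = 0 := by
      linear_combination γ*E3 - 2*δ*E1 + (2*a*α + b*γ)*E4
    have h2 : (2*F) ≠ 0 := by omega
    have := (mul_eq_zero.mp h).resolve_left h2
    linarith

private lemma dvd_gamma (a b c γ : ℤ) (hprim : Int.gcd (Int.gcd a b) c = 1)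
    (h1 : a ∣ b*γ) (h2 : a ∣ c*γ) : a ∣ γ := by
  have hab : a ∣ γ * (Int.gcd a b : ℤ) := by
    rw [Int.gcd_eq_gcd_ab a b]
    have : γ * (a * a.gcdA b + b * a.gcdB b) = a * (γ * a.gcdA b) + (b*γ) * a.gcdB b := by ring
    rw [this]
    exact dvd_add (Dvd.intro _ rfl) (h1.mul_right _)
  have habc : a ∣ γ * (Int.gcd (Int.gcd a b : ℤ) c : ℤ) := by
    rw [Int.gcd_eq_gcd_ab (Int.gcd a b : ℤ) c]
    have : γ * ((Int.gcd a b : ℤ) * (Int.gcd a b : ℤ).gcdA c + c * (Int.gcd a b : ℤ).gcdB c)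
        = (γ * (Int.gcd a b : ℤ)) * (Int.gcd a b : ℤ).gcdA c + (c*γ) * (Int.gcd a b : ℤ).gcdB c := by
      ring
    rw [this]
    exact dvd_add (hab.mul_right _) (h2.mul_right _)
  have hg : Int.gcd ((Int.gcd a b : ℤ)) c = Int.gcd (Int.gcd a b) c := by simp [Int.gcd]
  rw [hg, hprim] at habc
  simpa using habc

private lemma commonPart (a b c α β γ δ : ℤ) (f : ℕ)
    (hprim : Int.gcd (Int.gcd a b) c = 1)
    (hD : b^2 - 4*a*c < -4)
    (hf : f.Prime)
    (E1 : a*α^2 + b*α*γ + c*γ^2 = (f:ℤ)^2*a)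
    (E2 : a*β^2 + b*β*δ + c*δ^2 = (f:ℤ)^2*c)
    (E3 : 2*a*α*β + b*(α*δ + β*γ) + 2*c*γ*δ = (f:ℤ)^2*b)
    (E4 : α*δ - β*γ = (f:ℤ)^2) :
    a ≠ 0 ∧ ∃ u : ℤ, γ = a*u ∧ a*β + c*γ = 0 ∧ a*δ = a*α + b*γ ∧
      (α+δ)^2 - (b^2-4*a*c)*u^2 = 4*(f:ℤ)^2 ∧ u^2 < (f:ℤ)^2 := by
  have hfpos : (2:ℤ) ≤ (f:ℤ) := by exact_mod_cast hf.two_le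
  have hF : ((f:ℤ)^2) ≠ 0 := by positivity
  obtain ⟨hX, hY⟩ := structureLemma a b c α β γ δ ((f:ℤ)^2) hF E1 E2 E3 E4
  have ha : a ≠ 0 := by
    intro h
    rw [h] at hD
    nlinarith [sq_nonneg b]
  have hdγ : a ∣ γ := by
    refine dvd_gamma a b c γ hprim ⟨δ - α, by linarith⟩ ⟨-β, by linarith⟩
  obtain ⟨u, hu⟩ := hdγ
  refine ⟨ha, u, hu, hX, hY, ?_, ?_⟩
  · have key : a^2*((α+δ)^2 - (b^2-4*a*c)*u^2) = a^2*(4*(f:ℤ)^2) := by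
      linear_combination (4*a)*E1 + (a*(α+δ) + 2*a*α + b*γ)*hY + (b^2-4*a*c)*(γ + a*u)*hu
    exact mul_left_cancel₀ (pow_ne_zero 2 ha) key
  · have key : a^2*((α+δ)^2 - (b^2-4*a*c)*u^2) = a^2*(4*(f:ℤ)^2) := by
      linear_combination (4*a)*E1 + (a*(α+δ) + 2*a*α + b*γ)*hY + (b^2-4*a*c)*(γ + a*u)*hu
    have htu := mul_left_cancel₀ (pow_ne_zero 2 ha) key
    nlinarith [sq_nonneg (α+δ), sq_nonneg u]


lemma coreA (a b c g₁ g₂ P R S T : ℤ) (f : ℕ)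
    (hprim : Int.gcd (Int.gcd a b) c = 1)
    (hD : b^2 - 4*a*c < -4)
    (hf : f.Prime) (hodd : Odd f)
    (hg₁0 : 0 ≤ g₁) (hg₁f : g₁ < (f:ℤ)) (hg₂0 : 0 ≤ g₂) (hg₂f : g₂ < (f:ℤ))
    (hp₁ : ¬ (f:ℤ) ∣ (a*g₁^2 + b*g₁ + c))
    (hdet : P*T - R*S = 1)
    (α β γ δ : ℤ)
    (hα : α = (f:ℤ)*P + g₁*S) (hβ : β = (f:ℤ)^2*R + (f:ℤ)*g₁*T - (f:ℤ)*g₂*P - g₁*g₂*S)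
    (hγ : γ = S) (hδ : δ = (f:ℤ)*T - g₂*S)
    (E1 : a*α^2 + b*α*γ + c*γ^2 = (f:ℤ)^2*a)
    (E2 : a*β^2 + b*β*δ + c*δ^2 = (f:ℤ)^2*c)
    (E3 : 2*a*α*β + b*(α*δ + β*γ) + 2*c*γ*δ = (f:ℤ)^2*b) :
    g₁ = g₂ := by
  have hFp : Prime (f:ℤ) := Nat.prime_iff_prime_int.mp hf
  have hfpos : (2:ℤ) ≤ (f:ℤ) := by exact_mod_cast hf.two_le
  have hfne : (f:ℤ) ≠ 0 := by omega
  have E4 : α*δ - β*γ = (f:ℤ)^2 := by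
    rw [hα, hβ, hγ, hδ]; linear_combination ((f:ℤ)^2)*hdet
  obtain ⟨ha, u, hu, hX, hY, htu, hub⟩ :=
    commonPart a b c α β γ δ f hprim hD hf E1 E2 E3 E4
  by_cases hfu : (f:ℤ) ∣ u
  · -- then u = 0, S = 0, conclude g₁ = g₂
    have hu0 : u = 0 := by
      refine Int.eq_zero_of_abs_lt_dvd hfu ?_
      nlinarith [sq_abs u, abs_nonneg u]
    have hγ0 : γ = 0 := by rw [hu, hu0, mul_zero]
    have hS : S = 0 := by rw [← hγ, hγ0]
    rw [hγ0] at hX hY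
    rw [hS] at hα hβ hδ hdet
    have hTP : T = P := by
      have h1 : a * ((f:ℤ)*T) = a * ((f:ℤ)*P) := by
        rw [hα, hδ] at hY; linear_combination hY
      exact mul_left_cancel₀ hfne (mul_left_cancel₀ ha h1)
    have hβ0 : β = 0 := by
      have : a * β = a * 0 := by linear_combination hX
      exact mul_left_cancel₀ ha this
    rw [hTP] at hdet hβ
    have hP2 : P * P = 1 := by linarith
    have h2 : (f:ℤ) * ((f:ℤ)*R + g₁*P - g₂*P) = 0 := by
      rw [hβ0] at hβ; linear_combination -hβ
    have h3 : (f:ℤ)*R + g₁*P - g₂*P = 0 := by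
      rcases mul_eq_zero.mp h2 with h | h
      · exact absurd h hfne
      · exact h
    have hdvd : (f:ℤ) ∣ g₁ - g₂ := ⟨-(R*P), by linear_combination P*h3 - (g₁-g₂)*hP2⟩
    have := Int.eq_zero_of_abs_lt_dvd hdvd (by rw [abs_lt]; constructor <;> omega)
    omega
  · -- f does not divide u
    have hS' : S = a*u := by rw [← hγ, hu]
    have hrel2 : (f:ℤ)*(T-P) = (a*(g₁+g₂)+b)*u := by
      refine mul_left_cancel₀ ha ?_
      rw [hα, hδ, hS', hu] at hY
      linear_combination hY
    haveI : Fact (Nat.Prime f) := ⟨hf⟩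
    have hf3 : 3 ≤ f := by
      rcases Nat.Prime.eq_two_or_odd hf with h | h
      · rw [h] at hodd; simp [Nat.odd_iff] at hodd
      · have := hf.two_le; omega
    -- into ZMod f
    have hfK : ((f:ℤ) : ZMod f) = 0 := by
      push_cast
      exact ZMod.natCast_self f
    have hUne : ((u : ZMod f)) ≠ 0 := fun h => hfu ((ZMod.intCast_zmod_eq_zero_iff_dvd u f).mp h)
    have hbK : ((a:ZMod f))*((g₁:ZMod f)+(g₂:ZMod f))+(b:ZMod f) = 0 := by
      have h := congrArg (fun x : ℤ => (x : ZMod f)) hrel2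
      push_cast at h
      rw [ZMod.natCast_self] at h
      have h2 : ((a:ZMod f)*((g₁:ZMod f)+(g₂:ZMod f))+(b:ZMod f)) * (u : ZMod f) = 0 := by
        linear_combination -h
      exact (mul_eq_zero.mp h2).resolve_right hUne
    have hαδℤ : α + δ = (f:ℤ)*(P+T) + (g₁-g₂)*(a*u) := by
      rw [hα, hδ, hS']; ring
    have htuK : (((g₁:ZMod f)-(g₂:ZMod f))*(a:ZMod f)*(u:ZMod f))^2
        - (((b:ZMod f))^2-4*(a:ZMod f)*(c:ZMod f))*(u:ZMod f)^2 = 0 := by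
      have h := congrArg (fun x : ℤ => (x : ZMod f)) htu
      push_cast [hαδℤ] at h
      rw [ZMod.natCast_self] at h
      linear_combination h
    have hkey : (4*(a:ZMod f)*(u:ZMod f)^2) * ((c:ZMod f) - (a:ZMod f)*(g₁:ZMod f)*(g₂:ZMod f)) = 0 := by
      linear_combination htuK + ((b:ZMod f) - (a:ZMod f)*((g₁:ZMod f)+(g₂:ZMod f)))*(u:ZMod f)^2*hbK
    have h4ne : (4 : ZMod f) ≠ 0 := by
      intro h
      have h2 : ((4:ℕ) : ZMod f) = 0 := by exact_mod_cast h
      have h3 : f ∣ 4 := (ZMod.natCast_eq_zero_iff 4 f).mp h2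
      have h4 : f ∣ 2 := hf.dvd_of_dvd_pow (n := 2) (by norm_num; exact h3)
      have := (Nat.prime_dvd_prime_iff_eq hf Nat.prime_two).mp h4
      omega
    rcases mul_eq_zero.mp hkey with h | hC
    · -- 4*A*U² = 0 ⇒ A = 0 ⇒ f ∣ a, f ∣ b
      have hA : (a : ZMod f) = 0 := by
        rcases mul_eq_zero.mp h with h' | h'
        · rcases mul_eq_zero.mp h' with h'' | h''
          · exact absurd h'' h4ne
          · exact h''
        · exact absurd h' (pow_ne_zero 2 hUne)
      have hB : (b : ZMod f) = 0 := by linear_combination hbK - ((g₁:ZMod f)+(g₂:ZMod f))*hA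
      have hfa : (f:ℤ) ∣ a := (ZMod.intCast_zmod_eq_zero_iff_dvd a f).mp hA
      have hfb : (f:ℤ) ∣ b := (ZMod.intCast_zmod_eq_zero_iff_dvd b f).mp hB
      have hfc' : ¬ (f:ℤ) ∣ c := by
        intro hc
        have h1 : (f:ℤ) ∣ (Int.gcd a b : ℤ) := Int.dvd_coe_gcd hfa hfb
        have h2 : (f:ℤ) ∣ (Int.gcd (Int.gcd a b : ℤ) c : ℤ) := Int.dvd_coe_gcd h1 hc
        have hg : Int.gcd ((Int.gcd a b : ℤ)) c = Int.gcd (Int.gcd a b) c := by simp [Int.gcd]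
        rw [hg, hprim] at h2
        exact hFp.not_dvd_one (by exact_mod_cast h2)
      obtain ⟨a₁, ha₁⟩ := hfa
      obtain ⟨b₁, hb₁⟩ := hfb
      obtain ⟨k, hk⟩ : (f:ℤ) ∣ α + δ := ⟨P+T+(g₁-g₂)*a₁*u, by rw [hαδℤ, ha₁]; ring⟩
      have hDu : (f:ℤ)^2 ∣ (b^2-4*a*c)*u^2 :=
        ⟨k^2 - 4, by linear_combination -htu + (α+δ+(f:ℤ)*k)*hk⟩
      have hcop : IsCoprime ((f:ℤ)^2) (u^2) := ((hFp.coprime_iff_not_dvd).mpr hfu).pow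
      have hDdvd : (f:ℤ)^2 ∣ b^2-4*a*c := hcop.dvd_of_dvd_mul_right hDu
      obtain ⟨d, hd⟩ := hDdvd
      have h4ac : (f:ℤ)^2 ∣ a*(4*c) := ⟨b₁^2 - d, by linear_combination -hd + (b + (f:ℤ)*b₁)*hb₁⟩
      have hfne2 : ¬ (f:ℤ) ∣ 4 := by
        intro h
        have h2 : (f:ℤ) ∣ 2*2 := by norm_num at h ⊢; exact h
        rcases hFp.dvd_mul.mp h2 with h3 | h3 <;>
          · have := Int.le_of_dvd (by norm_num) h3
            omega
      have hcop2 : IsCoprime ((f:ℤ)^2) (4*c) :=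
        (((hFp.coprime_iff_not_dvd).mpr hfne2).mul_right ((hFp.coprime_iff_not_dvd).mpr hfc')).pow_left
      have hfa2 : (f:ℤ)^2 ∣ a := hcop2.dvd_of_dvd_mul_right h4ac
      obtain ⟨a₂, ha₂⟩ := hfa2
      have hβcu : β = -(c*u) := by
        refine mul_left_cancel₀ ha ?_
        rw [hu] at hX
        linear_combination hX
      have hdvdcu : (f:ℤ) ∣ c*u := by
        refine ⟨-((f:ℤ)*R) - g₁*T + g₂*P + g₁*g₂*(f:ℤ)*a₂*u, ?_⟩
        have hS2 : S = (f:ℤ)^2*a₂*u := by rw [hS', ha₂]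
        rw [hβcu, hS2] at hβ
        linear_combination -hβ
      rcases hFp.dvd_mul.mp hdvdcu with h' | h'
      · exact absurd h' hfc'
      · exact absurd h' hfu
    · -- C = A*G₁*G₂ ⇒ f ∣ q(g₁,1), contradiction
      exfalso
      apply hp₁
      rw [← ZMod.intCast_zmod_eq_zero_iff_dvd]
      push_cast
      linear_combination (g₁:ZMod f)*hbK + hC


lemma coreB (a b c g₂ P R S T : ℤ) (f : ℕ)
    (hprim : Int.gcd (Int.gcd a b) c = 1)
    (hD : b^2 - 4*a*c < -4)
    (hf : f.Prime) (hodd : Odd f)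
    (hg₂0 : 0 ≤ g₂) (hg₂f : g₂ < (f:ℤ))
    (hp₂ : ¬ (f:ℤ) ∣ (a*g₂^2 + b*g₂ + c))
    (hdet : P*T - R*S = 1)
    (α β γ δ : ℤ)
    (hα : α = P) (hβ : β = (f:ℤ)*R - g₂*P)
    (hγ : γ = (f:ℤ)*S) (hδ : δ = (f:ℤ)^2*T - (f:ℤ)*g₂*S)
    (E1 : a*α^2 + b*α*γ + c*γ^2 = (f:ℤ)^2*a)
    (E2 : a*β^2 + b*β*δ + c*δ^2 = (f:ℤ)^2*c)
    (E3 : 2*a*α*β + b*(α*δ + β*γ) + 2*c*γ*δ = (f:ℤ)^2*b) :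
    False := by
  have hFp : Prime (f:ℤ) := Nat.prime_iff_prime_int.mp hf
  have hf3 : 3 ≤ f := by
    rcases Nat.Prime.eq_two_or_odd hf with h | h
    · rw [h] at hodd; simp [Nat.odd_iff] at hodd
    · have := hf.two_le; omega
  have hfpos : (3:ℤ) ≤ (f:ℤ) := by exact_mod_cast hf3
  have hfne : (f:ℤ) ≠ 0 := by omega
  have E4 : α*δ - β*γ = (f:ℤ)^2 := by
    rw [hα, hβ, hγ, hδ]; linear_combination ((f:ℤ)^2)*hdet
  obtain ⟨ha, u, hu, hX, hY, htu, hub⟩ :=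
    commonPart a b c α β γ δ f hprim hD hf E1 E2 E3 E4
  have hfS : (f:ℤ)*S = a*u := by rw [← hγ, hu]
  have hβcu : β = -(c*u) := by
    refine mul_left_cancel₀ ha ?_
    rw [hu] at hX
    linear_combination hX
  have hI1 : (f:ℤ)*R - g₂*P = -(c*u) := by rw [← hβ, hβcu]
  have hI2 : (f:ℤ)*((f:ℤ)*T - g₂*S) = P + b*u := by
    refine mul_left_cancel₀ ha ?_
    rw [hα, hδ, hu] at hY
    linear_combination hY
  by_cases hfu : (f:ℤ) ∣ u
  · have hu0 : u = 0 := by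
      refine Int.eq_zero_of_abs_lt_dvd hfu ?_
      nlinarith [sq_abs u, abs_nonneg u]
    have hS : S = 0 := by
      have : (f:ℤ)*S = 0 := by rw [hfS, hu0]; ring
      rcases mul_eq_zero.mp this with h | h
      · exact absurd h hfne
      · exact h
    have hP : P = (f:ℤ)^2*T := by
      rw [hS, hu0] at hI2; linear_combination -hI2
    rw [hS, hP] at hdet
    have h2 : ((f:ℤ)^2) ∣ 1 := Dvd.intro (T*T) (by linarith)
    have := Int.le_of_dvd (by norm_num) h2
    nlinarith
  · haveI : Fact (Nat.Prime f) := ⟨hf⟩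
    have hUne : ((u : ZMod f)) ≠ 0 := fun h => hfu ((ZMod.intCast_zmod_eq_zero_iff_dvd u f).mp h)
    have hA : (a : ZMod f) = 0 := by
      have h := congrArg (fun x : ℤ => (x : ZMod f)) hfS
      push_cast at h
      rw [ZMod.natCast_self] at h
      have h2 : (a : ZMod f) * (u : ZMod f) = 0 := by linear_combination -h
      exact (mul_eq_zero.mp h2).resolve_right hUne
    have hP : (P : ZMod f) = -((b:ZMod f)*(u:ZMod f)) := by
      have h := congrArg (fun x : ℤ => (x : ZMod f)) hI2
      push_cast at h
      rw [ZMod.natCast_self] at h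
      linear_combination -h
    have hCU : (g₂ : ZMod f)*(P : ZMod f) = (c : ZMod f)*(u : ZMod f) := by
      have h := congrArg (fun x : ℤ => (x : ZMod f)) hI1
      push_cast at h
      rw [ZMod.natCast_self] at h
      linear_combination -h
    have hqg : ((a*g₂^2 + b*g₂ + c : ℤ) : ZMod f) = 0 := by
      push_cast
      have h3 : ((c : ZMod f) + (g₂:ZMod f)*(b:ZMod f))*(u:ZMod f) = 0 := by
        linear_combination (-1)*hCU + (g₂:ZMod f)*hP
      have hcb := (mul_eq_zero.mp h3).resolve_right hUne
      linear_combination hcb + (g₂:ZMod f)^2*hA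
    exact hp₂ ((ZMod.intCast_zmod_eq_zero_iff_dvd _ f).mp hqg)


theorem stmt18 (q : BQF) (D : ℤ) (hq : q.IsPrimitive) (hd : q.disc = D)
    (hD : D < -4) (f : ℕ) (hf : f.Prime) (hodd : Odd f)
    (g₁ g₂ : ℤ) (h₁0 : 0 ≤ g₁) (h₁f : g₁ ≤ f) (h₂0 : 0 ≤ g₂) (h₂f : g₂ ≤ f)
    (hp₁ : g₁ = f ∨ ¬ (f : ℤ) ∣ q.eval g₁ 1) (hp₂ : g₂ = f ∨ ¬ (f : ℤ) ∣ q.eval g₂ 1)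
    (heq : BQF.ProperEquiv (q.act (Rmat f g₁)) (q.act (Rmat f g₂))) : g₁ = g₂ := by
  by_cases h1 : g₁ = (f:ℤ)
  · by_cases h2 : g₂ = (f:ℤ)
    · rw [h1, h2]
    · -- g₁ = f, g₂ < f : contradiction
      exfalso
      obtain ⟨U, hU⟩ := heq
      obtain ⟨a, b, c⟩ := q
      simp only [BQF.IsPrimitive] at hq
      simp only [BQF.disc] at hd
      have hp₂' : ¬ (f:ℤ) ∣ (a*g₂^2 + b*g₂ + c) := by
        rcases hp₂ with h | h
        · exact absurd h h2
        · intro hdvd; apply h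
          have he : BQF.eval ⟨a,b,c⟩ g₂ 1 = a*g₂^2 + b*g₂ + c := by
            simp only [BQF.eval]; ring
          rw [he]; exact hdvd
      set P := U.1 0 0 with hP
      set R := U.1 0 1 with hR
      set S := U.1 1 0 with hS
      set T := U.1 1 1 with hT
      have hdet : P*T - R*S = 1 := by
        have := U.2
        rw [Matrix.det_fin_two] at this
        linarith
      rw [Matrix.eta_fin_two U.1, ← hP, ← hR, ← hS, ← hT] at hU
      rw [Rmat, if_pos h1, Rmat, if_neg h2] at hU
      have hW := congrArg (fun z : BQF => z.act !![1, -g₂; 0, (f:ℤ)]) hU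
      simp only [BQF.act_act, Matrix.mul_fin_two] at hW
      simp only [BQF.act_mk, BQF.eval, BQF.mk.injEq] at hW
      obtain ⟨E1', E3', E2'⟩ := hW
      refine coreB a b c g₂ P R S T f hq (by omega) hf hodd h₂0 (by omega) hp₂' hdet
        P ((f:ℤ)*R - g₂*P) ((f:ℤ)*S) ((f:ℤ)^2*T - (f:ℤ)*g₂*S) rfl rfl rfl rfl
        (by linear_combination E1') (by linear_combination E2') (by linear_combination E3')
  · by_cases h2 : g₂ = (f:ℤ)
    · -- g₁ < f, g₂ = f : contradiction, by symmetry
      exfalso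
      obtain ⟨U, hU⟩ := BQF.properEquiv_symm heq
      obtain ⟨a, b, c⟩ := q
      simp only [BQF.IsPrimitive] at hq
      simp only [BQF.disc] at hd
      have hp₁' : ¬ (f:ℤ) ∣ (a*g₁^2 + b*g₁ + c) := by
        rcases hp₁ with h | h
        · exact absurd h h1
        · intro hdvd; apply h
          have he : BQF.eval ⟨a,b,c⟩ g₁ 1 = a*g₁^2 + b*g₁ + c := by
            simp only [BQF.eval]; ring
          rw [he]; exact hdvd
      set P := U.1 0 0 with hP
      set R := U.1 0 1 with hR
      set S := U.1 1 0 with hS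
      set T := U.1 1 1 with hT
      have hdet : P*T - R*S = 1 := by
        have := U.2
        rw [Matrix.det_fin_two] at this
        linarith
      rw [Matrix.eta_fin_two U.1, ← hP, ← hR, ← hS, ← hT] at hU
      rw [Rmat, if_pos h2, Rmat, if_neg h1] at hU
      have hW := congrArg (fun z : BQF => z.act !![1, -g₁; 0, (f:ℤ)]) hU
      simp only [BQF.act_act, Matrix.mul_fin_two] at hW
      simp only [BQF.act_mk, BQF.eval, BQF.mk.injEq] at hW
      obtain ⟨E1', E3', E2'⟩ := hW
      refine coreB a b c g₁ P R S T f hq (by omega) hf hodd h₁0 (by omega) hp₁' hdet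
        P ((f:ℤ)*R - g₁*P) ((f:ℤ)*S) ((f:ℤ)^2*T - (f:ℤ)*g₁*S) rfl rfl rfl rfl
        (by linear_combination E1') (by linear_combination E2') (by linear_combination E3')
    · -- both < f
      obtain ⟨U, hU⟩ := heq
      obtain ⟨a, b, c⟩ := q
      simp only [BQF.IsPrimitive] at hq
      simp only [BQF.disc] at hd
      have hp₁' : ¬ (f:ℤ) ∣ (a*g₁^2 + b*g₁ + c) := by
        rcases hp₁ with h | h
        · exact absurd h h1
        · intro hdvd; apply h
          have he : BQF.eval ⟨a,b,c⟩ g₁ 1 = a*g₁^2 + b*g₁ + c := by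
            simp only [BQF.eval]; ring
          rw [he]; exact hdvd
      set P := U.1 0 0 with hP
      set R := U.1 0 1 with hR
      set S := U.1 1 0 with hS
      set T := U.1 1 1 with hT
      have hdet : P*T - R*S = 1 := by
        have := U.2
        rw [Matrix.det_fin_two] at this
        linarith
      rw [Matrix.eta_fin_two U.1, ← hP, ← hR, ← hS, ← hT] at hU
      rw [Rmat, if_neg h1, Rmat, if_neg h2] at hU
      have hW := congrArg (fun z : BQF => z.act !![1, -g₂; 0, (f:ℤ)]) hU
      simp only [BQF.act_act, Matrix.mul_fin_two] at hW
      simp only [BQF.act_mk, BQF.eval, BQF.mk.injEq] at hW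
      obtain ⟨E1', E3', E2'⟩ := hW
      refine coreA a b c g₁ g₂ P R S T f hq (by omega) hf hodd h₁0 (by omega) h₂0 (by omega)
        hp₁' hdet
        ((f:ℤ)*P + g₁*S) ((f:ℤ)^2*R + (f:ℤ)*g₁*T - (f:ℤ)*g₂*P - g₁*g₂*S) S ((f:ℤ)*T - g₂*S)
        rfl rfl rfl rfl
        (by linear_combination E1') (by linear_combination E2') (by linear_combination E3')
end
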